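/- Let (a_n)_{n∈ℤ} be nonnegative reals with ∑_n a_n = 1. Then for any α ≥ 1, α ∑_n a_n² + ∑_n n² a_n ≥ c α^{2/3} - 1 for some absolute constant c > 0. -/

import Mathlib

open Real ENNReal

lemma key_real (a : ℤ → ℝ) (ha : ∀ n, 0 ≤ a n) (hsum : Summable a)
    (hs : ∑' n, a n = 1) (hsq : Summable (fun n => a n ^ 2))
    (hT : Summable (fun n : ℤ => (n : ℝ) ^ 2 * a n))
    (α : ℝ) (hα : 1 ≤ α) :
    (1/100) * α ^ ((2:ℝ)/3) ≤ α * (∑' n, a n ^ 2) + ∑' n : ℤ, (n : ℝ) ^ 2 * a n := by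
  obtain ⟨β, hβdef⟩ : ∃ β : ℝ, β = α ^ ((1:ℝ)/3) := ⟨_, rfl⟩
  obtain ⟨T, hTdef⟩ : ∃ T : ℝ, T = ∑' n : ℤ, (n : ℝ) ^ 2 * a n := ⟨_, rfl⟩
  obtain ⟨S, hSdef⟩ : ∃ S : ℝ, S = ∑' n, a n ^ 2 := ⟨_, rfl⟩
  rw [← hTdef, ← hSdef]
  have hα0 : (0:ℝ) < α := by linarith
  have hβ1 : 1 ≤ β := hβdef ▸ Real.one_le_rpow hα (by norm_num)
  have hβ0 : 0 < β := by linarith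
  have hβ3 : β ^ 3 = α := by
    rw [hβdef, ← Real.rpow_natCast (α ^ ((1:ℝ)/3)) 3, ← Real.rpow_mul hα0.le]
    norm_num
  have h23 : α ^ ((2:ℝ)/3) = β ^ 2 := by
    rw [hβdef, ← Real.rpow_natCast (α ^ ((1:ℝ)/3)) 2, ← Real.rpow_mul hα0.le]
    norm_num
  have hT0 : 0 ≤ T := hTdef ▸ tsum_nonneg fun n => mul_nonneg (sq_nonneg _) (ha n)
  have hS0 : 0 ≤ S := hSdef ▸ tsum_nonneg fun n => sq_nonneg _
  rw [h23]
  by_cases hcase : (1/100) * β ^ 2 ≤ T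
  · have : 0 ≤ α * S := mul_nonneg hα0.le hS0
    linarith
  push_neg at hcase
  obtain ⟨N, hNdef⟩ : ∃ N : ℕ, N = ⌈β⌉₊ := ⟨_, rfl⟩
  have hNβ : β ≤ (N : ℝ) := hNdef ▸ Nat.le_ceil β
  have hN2 : (N : ℝ) ≤ 2 * β := by
    have := Nat.ceil_lt_add_one hβ0.le
    rw [hNdef]; push_cast; linarith
  obtain ⟨F, hFdef⟩ : ∃ F : Finset ℤ, F = Finset.Icc (-(N : ℤ)) N := ⟨_, rfl⟩
  have hcard : (F.card : ℝ) = 2 * N + 1 := by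
    rw [hFdef, Int.card_Icc]
    have : ((N : ℤ) + 1 - -(N : ℤ)).toNat = 2 * N + 1 := by omega
    rw [this]; push_cast; ring
  -- tail bound
  have htail : (∑' n : {n : ℤ // n ∉ F}, a n) ≤ T / β ^ 2 := by
    have hsub1 : Summable (fun n : {n : ℤ // n ∉ F} => a n) :=
      hsum.subtype _
    have hsub2 : Summable (fun n : {n : ℤ // n ∉ F} => ((n : ℤ) : ℝ) ^ 2 * a n / β ^ 2) :=
      (hT.subtype {n : ℤ | n ∉ F}).div_const _
    have hle : ∀ n : {n : ℤ // n ∉ F}, a n ≤ ((n : ℤ) : ℝ) ^ 2 * a n / β ^ 2 := by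
      rintro ⟨n, hn⟩
      have hn' : (N : ℤ) < n ∨ n < -(N : ℤ) := by
        rw [hFdef, Finset.mem_Icc] at hn; omega
      have hnsq : β ^ 2 ≤ ((n : ℤ) : ℝ) ^ 2 := by
        have h1 : (N : ℝ) ^ 2 ≤ ((n : ℤ) : ℝ) ^ 2 := by
          have : (N : ℤ) ^ 2 ≤ n ^ 2 := by
            rcases hn' with h | h
            · nlinarith
            · nlinarith
          exact_mod_cast this
        nlinarith
      rw [le_div_iff₀ (by positivity)]
      nlinarith [ha n]
    calc (∑' n : {n : ℤ // n ∉ F}, a n)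
        ≤ ∑' n : {n : ℤ // n ∉ F}, ((n : ℤ) : ℝ) ^ 2 * a n / β ^ 2 :=
          Summable.tsum_le_tsum hle hsub1 hsub2
      _ = (∑' n : {n : ℤ // n ∉ F}, ((n : ℤ) : ℝ) ^ 2 * a n) / β ^ 2 := by
          rw [tsum_div_const]
      _ ≤ T / β ^ 2 := by
          rw [hTdef]
          exact div_le_div_of_nonneg_right (Summable.tsum_subtype_le (fun n : ℤ => ((n : ℝ) ^ 2 * a n)) _
            (fun n => mul_nonneg (sq_nonneg _) (ha n)) hT) (by positivity)
  have hsplit : ∑ n ∈ F, a n + (∑' n : {n : ℤ // n ∉ F}, a n) = 1 := by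
    rw [Summable.sum_add_tsum_subtype_compl hsum F, hs]
  have hTbound : T / β ^ 2 ≤ 1/100 := by
    rw [div_le_iff₀ (by positivity)]
    nlinarith
  have hFsum : (1:ℝ)/2 ≤ ∑ n ∈ F, a n := by
    have := htail.trans hTbound
    linarith
  -- Cauchy-Schwarz
  have hCS : (∑ n ∈ F, a n) ^ 2 ≤ (F.card : ℝ) * ∑ n ∈ F, a n ^ 2 :=
    sq_sum_le_card_mul_sum_sq
  have hSle : ∑ n ∈ F, a n ^ 2 ≤ S :=
    hSdef ▸ Summable.sum_le_tsum F (fun n _ => sq_nonneg _) hsq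
  have hScard : (1:ℝ)/4 ≤ (F.card : ℝ) * S := by
    have hc0 : (0:ℝ) ≤ (F.card : ℝ) := by positivity
    nlinarith
  have hcard5 : (F.card : ℝ) ≤ 5 * β := by
    rw [hcard]; linarith
  have hSlower : 1 / (20 * β) ≤ S := by
    rw [div_le_iff₀ (by positivity)]
    have h5 : (F.card : ℝ) * S ≤ 5 * β * S := mul_le_mul_of_nonneg_right hcard5 hS0
    linarith
  have hmain : β ^ 2 / 20 ≤ α * S := by
    rw [← hβ3]
    have h1 : β ^ 3 * (1 / (20 * β)) ≤ β ^ 3 * S :=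
      mul_le_mul_of_nonneg_left hSlower (by positivity)
    have h2 : β ^ 3 * (1 / (20 * β)) = β ^ 2 / 20 := by
      field_simp
    linarith
  linarith

theorem discrete_lower_bound :
    ∃ c : ℝ, 0 < c ∧
      ∀ (a : ℤ → ℝ), (∀ n, 0 ≤ a n) → (∑' n, ENNReal.ofReal (a n)) = 1 →
        ∀ α : ℝ, 1 ≤ α →
          ENNReal.ofReal (c * α ^ ((2:ℝ)/3) - 1) ≤
            ENNReal.ofReal α * (∑' n, ENNReal.ofReal ((a n) ^ 2)) +
              ∑' n : ℤ, ENNReal.ofReal ((n : ℝ) ^ 2 * a n) := by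
  refine ⟨1/100, by norm_num, fun a ha hsum1 α hα => ?_⟩
  -- summability of a
  have hne : (∑' n, ENNReal.ofReal (a n)) ≠ ⊤ := by rw [hsum1]; exact one_ne_top
  have hsummable : Summable a := by
    have := ENNReal.summable_toReal hne
    simpa [ENNReal.toReal_ofReal (ha _)] using this
  have hs : ∑' n, a n = 1 := by
    have h1 : ENNReal.ofReal (∑' n, a n) = ∑' n, ENNReal.ofReal (a n) :=
      ENNReal.ofReal_tsum_of_nonneg ha hsummable
    rw [hsum1] at h1
    have h2 : (0:ℝ) ≤ ∑' n, a n := tsum_nonneg ha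
    have := congrArg ENNReal.toReal h1
    rwa [ENNReal.toReal_ofReal h2, ENNReal.toReal_one] at this
  have hale : ∀ n, a n ≤ 1 := by
    intro n
    rw [← hs]
    exact Summable.le_tsum hsummable n (fun m _ => ha m)
  have hsq : Summable (fun n => a n ^ 2) := by
    apply Summable.of_nonneg_of_le (fun n => sq_nonneg _) (fun n => ?_) hsummable
    calc a n ^ 2 = a n * a n := sq (a n) ▸ by ring
      _ ≤ a n * 1 := mul_le_mul_of_nonneg_left (hale n) (ha n)
      _ = a n := mul_one _
  by_cases hTtop : (∑' n : ℤ, ENNReal.ofReal ((n : ℝ) ^ 2 * a n)) = ⊤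
  · rw [hTtop, add_top]; exact le_top
  have hTsummable : Summable (fun n : ℤ => (n : ℝ) ^ 2 * a n) := by
    have := ENNReal.summable_toReal hTtop
    simpa [ENNReal.toReal_ofReal (mul_nonneg (sq_nonneg _) (ha _))] using this
  have hTeq : (∑' n : ℤ, ENNReal.ofReal ((n : ℝ) ^ 2 * a n)) =
      ENNReal.ofReal (∑' n : ℤ, (n : ℝ) ^ 2 * a n) :=
    (ENNReal.ofReal_tsum_of_nonneg (fun n => mul_nonneg (sq_nonneg _) (ha n)) hTsummable).symm
  have hSeq : (∑' n, ENNReal.ofReal ((a n) ^ 2)) = ENNReal.ofReal (∑' n, (a n) ^ 2) :=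
    (ENNReal.ofReal_tsum_of_nonneg (fun n => sq_nonneg _) hsq).symm
  rw [hTeq, hSeq, ← ENNReal.ofReal_mul (by linarith : (0:ℝ) ≤ α),
    ← ENNReal.ofReal_add (mul_nonneg (by linarith) (tsum_nonneg fun n => sq_nonneg _))
      (tsum_nonneg fun n => mul_nonneg (sq_nonneg _) (ha n))]
  apply ENNReal.ofReal_le_ofReal
  have := key_real a ha hsummable hs hsq hTsummable α hα
  linarith
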